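/- In the case α = 1, the constitutive relation can be inverted explicitly: if T and ε in ℝ² satisfy ε = T/(2μ(1 + β‖T‖)), then 2μβ‖ε‖ < 1 and T = (2μ/(1 − 2μβ‖ε‖)) ε. -/

import Mathlib

/-- explicit inversion of the strain-limiting constitutive relation in the
case `α = 1`: if `ε = T/(2μ(1 + β‖T‖))` then `2μβ‖ε‖ < 1` and
`T = (2μ/(1 − 2μβ‖ε‖)) ε`. -/
theorem strain_limiting_explicit_inverse_alpha_one
    (μ β : ℝ) (hμ : 0 < μ) (hβ : 0 < β)
    (T ε : EuclideanSpace ℝ (Fin 2))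
    (hε : ε = (1 / (2 * μ * (1 + β * ‖T‖))) • T) :
    2 * μ * β * ‖ε‖ < 1 ∧ T = (2 * μ / (1 - 2 * μ * β * ‖ε‖)) • ε := by
  have ht : (0:ℝ) ≤ ‖T‖ := norm_nonneg T
  have hc : 0 < 2 * μ * (1 + β * ‖T‖) := by positivity
  have hnε : ‖ε‖ = ‖T‖ / (2 * μ * (1 + β * ‖T‖)) := by
    rw [hε, norm_smul, Real.norm_eq_abs, abs_of_pos (by positivity)]
    ring
  have hkey : 2 * μ * β * ‖ε‖ = β * ‖T‖ / (1 + β * ‖T‖) := by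
    rw [hnε]; field_simp
  have h1 : 0 < 1 + β * ‖T‖ := by positivity
  have hlt : 2 * μ * β * ‖ε‖ < 1 := by
    rw [hkey, div_lt_one h1]; linarith
  refine ⟨hlt, ?_⟩
  have h2 : 1 - 2 * μ * β * ‖ε‖ = 1 / (1 + β * ‖T‖) := by
    rw [hkey]; field_simp; ring
  rw [h2, hε, smul_smul]
  have : 2 * μ / (1 / (1 + β * ‖T‖)) * (1 / (2 * μ * (1 + β * ‖T‖))) = 1 := by
    field_simp
  rw [this, one_smul]
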